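/- Let f be a binary word of length n with a 2-tilde-error overlap of shift r realized by a tilde-transformation (R_i, R_j) with i < j (two replacements), i.e., suf_{n-r}(f) = R_j(R_i(pre_{n-r}(f))). Then the word α = pre_r(f) · R_i(f) is f-free. -/

import Mathlib

/-- One tilde edit step: a single-bit replacement or a swap of two adjacent distinct symbols. -/
def tildeStep (u v : List Bool) : Prop :=
  (∃ i, i < u.length ∧ v = u.set i (!(u.getD i false))) ∨
  (∃ i, i + 1 < u.length ∧ u.getD i false ≠ u.getD (i+1) false ∧
    v = (u.set i (u.getD (i+1) false)).set (i+1) (u.getD i false))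

/-- A chain of `d` tilde steps from `u` to `v`. -/
def tildeChain : ℕ → List Bool → List Bool → Prop
  | 0, u, v => u = v
  | d+1, u, v => ∃ w, tildeStep u w ∧ tildeChain d w v

/-- The tilde-distance: minimum number of replacements and adjacent swaps. -/
noncomputable def tildeDist (u v : List Bool) : ℕ :=
  sInf {d | tildeChain d u v}

/-- `f` occurs as a contiguous factor of `w`. -/
def isFactor (f w : List Bool) : Prop := ∃ s t, w = s ++ f ++ t

/-- `w` is `f`-free. -/
def fFree (f w : List Bool) : Prop := ¬ isFactor f w

/-- A chain of `d` tilde steps from `u` to `v` all of whose intermediate words are `f`-free. -/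
def freeTildeChain (f : List Bool) : ℕ → List Bool → List Bool → Prop
  | 0, u, v => u = v
  | d+1, u, v => ∃ w, tildeStep u w ∧ fFree f w ∧ freeTildeChain f d w v

/-- `f` is tilde-isometric. -/
def tildeIsometric (f : List Bool) : Prop :=
  ∀ u v : List Bool, u.length = v.length → f.length ≤ u.length →
    fFree f u → fFree f v → freeTildeChain f (tildeDist u v) u v

/-- Replacement at (0-indexed) position `i`. -/
def repl (w : List Bool) (i : ℕ) : List Bool := w.set i (!(w.getD i false))

/-- Swap of positions `i` and `i+1` (0-indexed). -/
def swap (w : List Bool) (i : ℕ) : List Bool :=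
  (w.set i (w.getD (i+1) false)).set (i+1) (w.getD i false)

/-- Hamming distance between equal-length binary words. -/
def hammingDistL (u v : List Bool) : ℕ :=
  ((List.range u.length).filter (fun i => u.getD i false != v.getD i false)).length

/-- One Hamming edit step: a single-bit replacement. -/
def hammStep (u v : List Bool) : Prop :=
  ∃ i, i < u.length ∧ v = u.set i (!(u.getD i false))

/-- A chain of `d` Hamming steps from `u` to `v`, all intermediate words `f`-free. -/
def freeHammChain (f : List Bool) : ℕ → List Bool → List Bool → Prop
  | 0, u, v => u = v
  | d+1, u, v => ∃ w, hammStep u w ∧ fFree f w ∧ freeHammChain f d w v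

/-- `f` is Hamming-isometric. -/
def hammIsometric (f : List Bool) : Prop :=
  ∀ u v : List Bool, u.length = v.length → f.length ≤ u.length →
    fFree f u → fFree f v → freeHammChain f (hammingDistL u v) u v

/-- Helper: cancellation of addition in `Nat` mod equalities. -/
theorem stmt15_mod_cancel (t a b : ℕ) : (a + b) % t = a % t ↔ b % t = 0 := by
  constructor
  · intro h
    have h' : a + b ≡ a + 0 [MOD t] := by
      simpa [Nat.ModEq] using h
    have := Nat.ModEq.add_left_cancel' a h'
    simpa [Nat.ModEq] using this
  · intro h
    obtain ⟨c, hc⟩ := (Nat.dvd_iff_mod_eq_zero).mpr h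
    subst hc
    simp [Nat.add_mul_mod_self_left]

theorem stmt15 (f : List Bool) (n r i j : ℕ) (hn : f.length = n)
    (hr0 : 0 < r) (hrn : r < n) (hij : i < j) (hj : j < n - r)
    (hov : f.drop r = repl (repl (f.take (n - r)) i) j) :
    fFree f (f.take r ++ repl f i) := by
  rintro ⟨u, v, huv⟩
  -- notation
  set F : ℕ → Bool := fun x => f.getD x false with hF
  have hiN : i < n - r := lt_trans hij hj
  have hin : i < n := lt_of_lt_of_le hiN (Nat.sub_le n r)
  have hjn : j < n := lt_of_lt_of_le hj (Nat.sub_le n r)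
  have hrn' : r ≤ n := le_of_lt hrn
  have hlen_take : (f.take r).length = r := by simp [hn, hrn']
  have hlen_repl : (repl f i).length = n := by simp [repl, hn]
  -- value of repl f i
  have hrepl : ∀ q : ℕ, (repl f i).getD q false = xor (F q) (decide (q = i)) := by
    intro q
    show (f.set i (!(f.getD i false))).getD q false = xor (f.getD q false) (decide (q = i))
    by_cases hq : q = i
    · subst hq
      rw [List.getD_eq_getElem?_getD, List.getElem?_set, if_pos rfl, if_pos (by omega)]
      simp
    · rw [List.getD_eq_getElem?_getD, List.getElem?_set, if_neg (Ne.symm hq),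
        ← List.getD_eq_getElem?_getD]
      simp [hq]
  -- the shift s of the occurrence
  set s := u.length with hs
  have hlen : r + n = s + (n + v.length) := by
    have := congrArg List.length huv
    simpa [hlen_take, hlen_repl, hn, add_assoc] using this
  have hsr : s ≤ r := by omega
  -- pointwise occurrence condition
  have hocc : ∀ k, k < n →
      (if s + k < r then F (s + k) else xor (F (s + k - r)) (decide (s + k - r = i))) = F k := by
    intro k hk
    have h1 := congrArg (fun w => w.getD (s + k) false) huv
    have hL : (f.take r ++ repl f i).getD (s + k) false =
        (if s + k < r then F (s + k) else xor (F (s + k - r)) (decide (s + k - r = i))) := by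
      by_cases hc : s + k < r
      · rw [if_pos hc]
        rw [List.getD_eq_getElem?_getD, List.getElem?_append_left (by rw [hlen_take]; exact hc),
          List.getElem?_take_of_lt hc, ← List.getD_eq_getElem?_getD]
      · rw [if_neg hc]
        rw [List.getD_eq_getElem?_getD, List.getElem?_append_right (by rw [hlen_take]; omega),
          hlen_take, ← List.getD_eq_getElem?_getD]
        exact hrepl (s + k - r)
    have hR : (u ++ f ++ v).getD (s + k) false = F k := by
      rw [List.append_assoc, List.getD_eq_getElem?_getD,
        List.getElem?_append_right (by omega), Nat.add_sub_cancel_left,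
        List.getElem?_append_left (by omega : k < f.length), ← List.getD_eq_getElem?_getD]
    rw [hL] at h1
    rw [hR] at h1
    exact h1
  -- the two error conditions of the overlap
  have hlen_take2 : (f.take (n - r)).length = n - r := by simp [hn]
  have htake2 : ∀ q, q < n - r → (f.take (n - r)).getD q false = F q := by
    intro q hq
    rw [List.getD_eq_getElem?_getD, List.getElem?_take_of_lt hq, ← List.getD_eq_getElem?_getD]
  have hdrop : ∀ m, m < n - r → F (r + m) =
      (repl (repl (f.take (n - r)) i) j).getD m false := by
    intro m hm
    have := congrArg (fun w => w.getD m false) hov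
    rw [← this, List.getD_eq_getElem?_getD, List.getElem?_drop, ← List.getD_eq_getElem?_getD]
  have hreplT : ∀ q, q < n - r →
      (repl (f.take (n - r)) i).getD q false = xor (F q) (decide (q = i)) := by
    intro q hq
    show ((f.take (n - r)).set i (!(f.take (n - r)).getD i false)).getD q false = _
    by_cases hqi : q = i
    · subst hqi
      rw [List.getD_eq_getElem?_getD, List.getElem?_set, if_pos rfl,
        if_pos (by rw [hlen_take2]; exact hq)]
      rw [htake2 q hq]
      simp
    · rw [List.getD_eq_getElem?_getD, List.getElem?_set, if_neg (Ne.symm hqi),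
        ← List.getD_eq_getElem?_getD, htake2 q hq]
      simp [hqi]
  have hlen_replT : (repl (f.take (n - r)) i).length = n - r := by
    simp [repl, hlen_take2]
  have hBi : F (r + i) = ! F i := by
    rw [hdrop i hiN]
    show ((repl (f.take (n - r)) i).set j
      (!(repl (f.take (n - r)) i).getD j false)).getD i false = !F i
    rw [List.getD_eq_getElem?_getD, List.getElem?_set, if_neg (by omega : ¬ j = i),
      ← List.getD_eq_getElem?_getD, hreplT i hiN]
    simp
  have hBj : F (r + j) = ! F j := by
    rw [hdrop j hj]
    show ((repl (f.take (n - r)) i).set j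
      (!(repl (f.take (n - r)) i).getD j false)).getD j false = !F j
    rw [List.getD_eq_getElem?_getD, List.getElem?_set, if_pos rfl,
      if_pos (by rw [hlen_replT]; exact hj)]
    rw [hreplT j hj]
    simp [show ¬ (j = i) by omega]
  -- case s = r : f = repl f i, contradiction
  rcases eq_or_lt_of_le hsr with hseq | hslt
  · have h1 := hocc i hin
    rw [if_neg (by omega)] at h1
    rw [hseq] at h1
    simp at h1
  -- case s < r
  set t := r - s with ht
  have ht0 : 0 < t := by omega
  have hstr : s + t = r := by omega
  -- the two near-periodicity relations
  have hA1 : ∀ k, k < t → F (s + k) = F k := by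
    intro k hk
    have h1 := hocc k (by omega)
    rw [if_pos (by omega)] at h1
    exact h1
  have hA2 : ∀ k, k < n - t → F (k + t) = xor (F k) (decide (k = i)) := by
    intro k hk
    have h1 := hocc (k + t) (by omega)
    rw [if_neg (by omega)] at h1
    have he : s + (k + t) - r = k := by omega
    rw [he] at h1
    exact h1.symm
  -- the chi decomposition
  set χ : ℕ → Bool := fun x => decide (x % t = i % t) && decide (i < x) with hχ
  have hchi : ∀ x, x < n → F x = xor (F (x % t)) (χ x) := by
    intro x
    induction x using Nat.strong_induction_on with
    | _ x ih =>
      intro hx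
      rcases lt_or_ge x t with hxt | hxt
      · rw [Nat.mod_eq_of_lt hxt]
        have hfalse : χ x = false := by
          simp only [hχ, Bool.and_eq_false_iff, decide_eq_false_iff_not]
          by_cases hix : i < x
          · left
            intro hcon
            have h1 : x % t = x := Nat.mod_eq_of_lt hxt
            have h2 : i % t ≤ i := Nat.mod_le i t
            omega
          · right; exact hix
        simp [hfalse]
      · have h2 := hA2 (x - t) (by omega)
        rw [Nat.sub_add_cancel hxt] at h2
        have ih' := ih (x - t) (by omega) (by omega)
        have hmod : (x - t) % t = x % t := by
          conv_rhs => rw [← Nat.sub_add_cancel hxt]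
          rw [Nat.add_mod_right]
        rw [hmod] at ih'
        rw [h2, ih']
        have hstep : χ x = xor (χ (x - t)) (decide (x - t = i)) := by
          by_cases hxi : x - t = i
          · have hx1 : x = i + t := by omega
            have hm : x % t = i % t := by rw [hx1, Nat.add_mod_right]
            have hc : χ (x - t) = false := by
              simp [hχ, hxi]
            simp [hχ, hc, hm, hxi, show i < x by omega]
          · have heq : χ x = χ (x - t) := by
              by_cases hm : x % t = i % t
              · have hb : (i < x) = (i < x - t) := by
                  apply propext
                  constructor
                  · intro hlt
                    by_contra hcon
                    have h3 : x - t < i := by omega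
                    have hd : 0 < x - i ∧ x - i < t := by omega
                    have : (x - i) % t = 0 := by
                      have : (i + (x - i)) % t = i % t := by
                        rw [show i + (x - i) = x by omega, hm]
                      exact (stmt15_mod_cancel t i (x - i)).mp this
                    rw [Nat.mod_eq_of_lt hd.2] at this
                    omega
                  · intro hlt; omega
                simp [hχ, hm, hmod, hb]
              · simp [hχ, hm, hmod]
            simp [heq, hxi]
        rw [hstep]
        cases F (x % t) <;> cases χ (x - t) <;> cases hdec : (decide (x - t = i)) <;> simp
  -- final contradiction
  by_cases hs0 : s % t = 0
  · -- use position j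
    have hr0' : r % t = 0 := by
      rw [← hstr, Nat.add_mod_right]; exact hs0
    have hrj : (r + j) % t = j % t := by
      rw [add_comm]; exact (stmt15_mod_cancel t j r).mpr hr0'
    have h1 := hchi (r + j) (by omega)
    have h2 := hchi j (by omega)
    rw [hrj] at h1
    have hc1 : χ (r + j) = decide (j % t = i % t) := by
      simp [hχ, hrj, show i < r + j by omega]
    have hc2 : χ j = decide (j % t = i % t) := by
      simp [hχ, hij]
    rw [hc1] at h1
    rw [hc2] at h2
    rw [hBj, h2] at h1
    cases F (j % t) <;> cases hdec : decide (j % t = i % t) <;> simp [hdec] at h1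
  · -- use position i
    have hkey : (i + s) % t ≠ i % t := by
      intro hcon
      exact hs0 ((stmt15_mod_cancel t i s).mp hcon)
    have hri : (r + i) % t = (i + s) % t := by
      rw [show r + i = i + s + t by omega, Nat.add_mod_right]
    have h1 := hchi (r + i) (by omega)
    have hc1 : χ (r + i) = false := by
      simp only [hχ, Bool.and_eq_false_iff, decide_eq_false_iff_not]
      left; rw [hri]; exact hkey
    rw [hc1, hri] at h1
    have h2 := hchi i (by omega)
    have hc2 : χ i = false := by simp [hχ]
    rw [hc2] at h2
    have h3 := hA1 (i % t) (Nat.mod_lt i ht0)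
    have h4 := hchi (s + i % t) (by
      have := Nat.mod_lt i ht0
      omega)
    have hm4 : (s + i % t) % t = (i + s) % t := by
      rw [Nat.add_mod_mod, Nat.add_comm]
    have hc4 : χ (s + i % t) = false := by
      simp only [hχ, Bool.and_eq_false_iff, decide_eq_false_iff_not]
      left; rw [hm4]; exact hkey
    rw [hc4, hm4] at h4
    -- chain: F (r+i) = F ((i+s)%t) = F (s + i%t) = F (i%t) = F i
    rw [hBi] at h1
    rw [h3] at h4
    simp only [Bool.xor_false] at h1 h2 h4
    rw [h2, ← h4] at h1
    simp at h1
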